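/- Let R be a 3-row graph with s columns, R_C eulerian, and f the vertex 3-coloring with f(v_{ij}) = i. If f extends to an amiable coloring (f,g) of R, then R has a symmetric parity-coloring. -/

import Mathlib

/-! A 3-row graph with `s` columns is a simple graph on `Fin 3 × Fin s`
(vertex `(i, j)` lies in row `i` and column `j`) whose columns are independent. -/

/-- Every column is an independent set. -/
def ColIndep {s : ℕ} (R : SimpleGraph (Fin 3 × Fin s)) : Prop :=
  ∀ i i' j, ¬ R.Adj (i, j) (i', j)

/-- `d_c(v, R)`: the number of edges of color `c` (under the edge coloring `g`)
incident with `v`. -/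
noncomputable def dColor {s : ℕ} (R : SimpleGraph (Fin 3 × Fin s))
    (g : Sym2 (Fin 3 × Fin s) → Fin 3) (c : Fin 3) (v : Fin 3 × Fin s) : ℕ :=
  {w | R.Adj v w ∧ g s(v, w) = c}.ncard

/-- An amiable coloring of a 3-row graph: a vertex 3-coloring `f` and an edge
3-coloring `g` such that (i) `f` is injective on every column, (ii) no edge has
the color of one of its endpoints, (iii) for every color `c` and column `j`,
`d_c(v₀ⱼ) + d_c(v₁ⱼ) + d_c(v₂ⱼ)` is even. -/
def Amiable {s : ℕ} (R : SimpleGraph (Fin 3 × Fin s))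
    (f : Fin 3 × Fin s → Fin 3) (g : Sym2 (Fin 3 × Fin s) → Fin 3) : Prop :=
  (∀ j, Function.Injective (fun i : Fin 3 => f (i, j))) ∧
  (∀ v w, R.Adj v w → f v ≠ g s(v, w)) ∧
  (∀ c : Fin 3, ∀ j,
    Even (dColor R g c (0, j) + dColor R g c (1, j) + dColor R g c (2, j)))

/-- `R_C` (the multigraph obtained by identifying each column to one vertex) is
eulerian: the degree of each column, i.e. the sum of the degrees of its three
vertices (columns being independent), is even. -/
def EulerianRC {s : ℕ} (R : SimpleGraph (Fin 3 × Fin s)) : Prop :=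
  ∀ j, Even ((R.neighborSet (0, j)).ncard + (R.neighborSet (1, j)).ncard +
    (R.neighborSet (2, j)).ncard)

/-- The `i`-th row. -/
def rowSet (s : ℕ) (i : Fin 3) : Set (Fin 3 × Fin s) := {v | v.1 = i}

/-- `d(v, R[V_a ∪ V_b])`: the degree of `v` in the subgraph induced by rows `a`, `b`. -/
noncomputable def dRows {s : ℕ} (R : SimpleGraph (Fin 3 × Fin s)) (a b : Fin 3)
    (v : Fin 3 × Fin s) : ℕ :=
  {w | R.Adj v w ∧ (w.1 = a ∨ w.1 = b)}.ncard

/-- `|N(v) ∩ V_a|`: the number of neighbours of `v` in row `a`. -/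
noncomputable def nRow {s : ℕ} (R : SimpleGraph (Fin 3 × Fin s)) (a : Fin 3)
    (v : Fin 3 × Fin s) : ℕ :=
  {w | R.Adj v w ∧ w.1 = a}.ncard

/-- A symmetric parity-coloring: a black/white coloring `φ` (`true` = black) with
(i) `φ(v₀ⱼ) = φ(v₁ⱼ)` iff `d(v₀ⱼ, R[V₁ ∪ V₂]) ≡ |N(v₁ⱼ) ∩ V₁| (mod 2)`,
(ii) `φ(v₁ⱼ) = φ(v₂ⱼ)` iff `d(v₁ⱼ, R[V₂ ∪ V₃]) ≡ |N(v₂ⱼ) ∩ V₂| (mod 2)`,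
(iii) every component of every row has an even number of black vertices.
(Here rows are indexed `0,1,2` instead of the paper's `1,2,3`.) -/
def SymParity {s : ℕ} (R : SimpleGraph (Fin 3 × Fin s))
    (φ : Fin 3 × Fin s → Bool) : Prop :=
  (∀ j, (φ (0, j) = φ (1, j)) ↔ Even (dRows R 0 1 (0, j) + nRow R 0 (1, j))) ∧
  (∀ j, (φ (1, j) = φ (2, j)) ↔ Even (dRows R 1 2 (1, j) + nRow R 1 (2, j))) ∧
  (∀ i : Fin 3, ∀ K : (R.induce (rowSet s i)).ConnectedComponent,
    Even ({u : rowSet s i | u ∈ K.supp ∧ φ u.val = true}.ncard))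


open Finset

namespace Stmt11Aux

attribute [local instance] Classical.propDecidable

variable {s : ℕ}

/-- Number of neighbours `w` of `v` satisfying `p`. -/
noncomputable def cnt (R : SimpleGraph (Fin 3 × Fin s)) (v : Fin 3 × Fin s)
    (p : Fin 3 × Fin s → Prop) : ℕ :=
  ((univ : Finset (Fin 3 × Fin s)).filter (fun w => R.Adj v w ∧ p w)).card

lemma ncard_eq_cnt (R : SimpleGraph (Fin 3 × Fin s)) (v : Fin 3 × Fin s)
    (p : Fin 3 × Fin s → Prop) : {w | R.Adj v w ∧ p w}.ncard = cnt R v p := by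
  have h : {w | R.Adj v w ∧ p w}
      = ↑((univ : Finset (Fin 3 × Fin s)).filter (fun w => R.Adj v w ∧ p w)) := by
    ext w; simp
  rw [h, Set.ncard_coe_finset]; rfl

lemma cnt_congr {R : SimpleGraph (Fin 3 × Fin s)} {v : Fin 3 × Fin s}
    {p q : Fin 3 × Fin s → Prop} (h : ∀ w, R.Adj v w → (p w ↔ q w)) :
    cnt R v p = cnt R v q := by
  unfold cnt
  congr 1
  apply filter_congr
  intro w _
  constructor
  · rintro ⟨ha, hp⟩; exact ⟨ha, (h w ha).1 hp⟩
  · rintro ⟨ha, hq⟩; exact ⟨ha, (h w ha).2 hq⟩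

lemma cnt_split {R : SimpleGraph (Fin 3 × Fin s)} {v : Fin 3 × Fin s}
    {p q : Fin 3 × Fin s → Prop} (h : ∀ w, R.Adj v w → ¬(p w ∧ q w)) :
    cnt R v (fun w => p w ∨ q w) = cnt R v p + cnt R v q := by
  have hd : Disjoint ((univ : Finset (Fin 3 × Fin s)).filter (fun w => R.Adj v w ∧ p w))
      ((univ : Finset (Fin 3 × Fin s)).filter (fun w => R.Adj v w ∧ q w)) := by
    rw [disjoint_left]
    intro w hw1 hw2
    simp only [mem_filter, mem_univ, true_and] at hw1 hw2
    exact h w hw1.1 ⟨hw1.2, hw2.2⟩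
  unfold cnt
  rw [← card_union_of_disjoint hd]
  congr 1
  ext w
  simp only [mem_filter, mem_union, mem_univ, true_and]
  tauto

lemma cnt_eq_zero {R : SimpleGraph (Fin 3 × Fin s)} {v : Fin 3 × Fin s}
    {p : Fin 3 × Fin s → Prop} (h : ∀ w, R.Adj v w → ¬ p w) :
    cnt R v p = 0 := by
  unfold cnt
  rw [card_eq_zero, filter_eq_empty_iff]
  intro w _
  rintro ⟨ha, hp⟩
  exact h w ha hp

lemma cnt_rows (R : SimpleGraph (Fin 3 × Fin s)) (v : Fin 3 × Fin s)
    (p : Fin 3 × Fin s → Prop) :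
    cnt R v p = cnt R v (fun w => p w ∧ w.1 = 0) + cnt R v (fun w => p w ∧ w.1 = 1)
      + cnt R v (fun w => p w ∧ w.1 = 2) := by
  have h3 : ∀ i : Fin 3, i = 0 ∨ i = 1 ∨ i = 2 := by decide
  have e1 : cnt R v p
      = cnt R v (fun w => (p w ∧ w.1 = 0) ∨ ((p w ∧ w.1 = 1) ∨ (p w ∧ w.1 = 2))) := by
    apply cnt_congr
    intro w _
    rcases h3 w.1 with h | h | h <;> simp [h] <;> tauto
  rw [e1, cnt_split, cnt_split]
  · ring
  · intro w _; rintro ⟨⟨_, h1⟩, ⟨_, h2⟩⟩; rw [h1] at h2; exact absurd h2 (by decide)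
  · intro w _; rintro ⟨⟨_, h1⟩, (⟨_, h2⟩ | ⟨_, h2⟩)⟩ <;> rw [h1] at h2 <;>
      exact absurd h2 (by decide)


variable (R : SimpleGraph (Fin 3 × Fin s)) (g : Sym2 (Fin 3 × Fin s) → Fin 3)

/-- Number of edges of colour `c` inside row `i` incident with `(i, j)`. -/
noncomputable def E (i c : Fin 3) (j : Fin s) : ℕ :=
  cnt R (i, j) (fun w => w.1 = i ∧ g s((i, j), w) = c)

lemma dColor_eq (c : Fin 3) (v : Fin 3 × Fin s) :
    dColor R g c v = cnt R v (fun w => g s(v, w) = c) :=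
  ncard_eq_cnt R v _

lemma dRows_eq (a b : Fin 3) (v : Fin 3 × Fin s) :
    dRows R a b v = cnt R v (fun w => w.1 = a ∨ w.1 = b) :=
  ncard_eq_cnt R v _

lemma nRow_eq (a : Fin 3) (v : Fin 3 × Fin s) :
    nRow R a v = cnt R v (fun w => w.1 = a) :=
  ncard_eq_cnt R v _

section Key

variable (hfg : Amiable R (fun v => v.1) g)

include hfg

/-- colours of edges avoid the rows of both endpoints -/
lemma color_ne_left {v w : Fin 3 × Fin s} (ha : R.Adj v w) : g s(v, w) ≠ v.1 :=
  fun h => hfg.2.1 v w ha h.symm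

lemma color_ne_right {v w : Fin 3 × Fin s} (ha : R.Adj v w) : g s(v, w) ≠ w.1 := by
  have := hfg.2.1 w v ha.symm
  rw [Sym2.eq_swap] at this
  exact fun h => this h.symm

lemma key01 (j : Fin s) :
    Even (dRows R 0 1 (0, j) + nRow R 0 (1, j) + (E R g 0 1 j + E R g 1 2 j)) := by
  have hfin3 : ∀ c : Fin 3, c ≠ 0 → c ≠ 1 → c = 2 := by decide
  have hfin3' : ∀ c : Fin 3, c ≠ 0 → c = 1 ∨ c = 2 := by decide
  -- abbreviations
  set A1 := E R g 0 1 j with hA1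
  set A2 := cnt R ((0 : Fin 3), j) (fun w => w.1 = 0 ∧ g s(((0 : Fin 3), j), w) = 2) with hA2
  set B := cnt R ((0 : Fin 3), j) (fun w => w.1 = 1) with hB
  set B' := cnt R ((1 : Fin 3), j) (fun w => w.1 = 0) with hB'
  set C2 := E R g 1 2 j with hC2
  -- dRows split
  have e1 : dRows R 0 1 (0, j) = A1 + A2 + B := by
    rw [dRows_eq, cnt_split (q := fun w => w.1 = 1)]
    · congr 1
      rw [hA1, E, ← cnt_split]
      · apply cnt_congr
        intro w ha
        have h0 : g s(((0 : Fin 3), j), w) ≠ 0 := color_ne_left R g hfg ha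
        rcases hfin3' _ h0 with h | h <;> simp [h] <;> tauto
      · rintro w - ⟨⟨-, h1⟩, ⟨-, h2⟩⟩
        rw [h1] at h2; exact absurd h2 (by decide)
    · rintro w - ⟨h1, h2⟩
      rw [h1] at h2; exact absurd h2 (by decide)
  -- all row-0/row-1 cross edges at (0,j) are coloured 2
  have e3 : B = cnt R ((0 : Fin 3), j) (fun w => w.1 = 1 ∧ g s(((0 : Fin 3), j), w) = 2) := by
    apply cnt_congr
    intro w ha
    have h0 : g s(((0 : Fin 3), j), w) ≠ 0 := color_ne_left R g hfg ha
    have h1 : g s(((0 : Fin 3), j), w) ≠ w.1 := color_ne_right R g hfg ha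
    constructor
    · intro hw; exact ⟨hw, hfin3 _ h0 (hw ▸ h1)⟩
    · rintro ⟨hw, -⟩; exact hw
  have e4 : dColor R g 2 (0, j) = A2 + B := by
    rw [dColor_eq, cnt_rows R ((0 : Fin 3), j) (fun w => g s(((0 : Fin 3), j), w) = 2), e3]
    have z2 : cnt R ((0 : Fin 3), j)
        (fun w => g s(((0 : Fin 3), j), w) = 2 ∧ w.1 = 2) = 0 := by
      apply cnt_eq_zero
      rintro w ha ⟨hg2, hw2⟩
      exact color_ne_right R g hfg ha (hg2.trans hw2.symm)
    rw [z2]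
    have c1 : cnt R ((0 : Fin 3), j) (fun w => g s(((0 : Fin 3), j), w) = 2 ∧ w.1 = 0)
        = A2 := by
      rw [hA2]; apply cnt_congr; intro w _; tauto
    have c2 : cnt R ((0 : Fin 3), j) (fun w => g s(((0 : Fin 3), j), w) = 2 ∧ w.1 = 1)
        = cnt R ((0 : Fin 3), j) (fun w => w.1 = 1 ∧ g s(((0 : Fin 3), j), w) = 2) := by
      apply cnt_congr; intro w _; tauto
    rw [c1, c2, add_zero]
  have e5 : dColor R g 2 (1, j) = C2 + B' := by
    rw [dColor_eq, cnt_rows R ((1 : Fin 3), j) (fun w => g s(((1 : Fin 3), j), w) = 2)]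
    have z2 : cnt R ((1 : Fin 3), j)
        (fun w => g s(((1 : Fin 3), j), w) = 2 ∧ w.1 = 2) = 0 := by
      apply cnt_eq_zero
      rintro w ha ⟨hg2, hw2⟩
      exact color_ne_right R g hfg ha (hg2.trans hw2.symm)
    rw [z2]
    have c1 : cnt R ((1 : Fin 3), j) (fun w => g s(((1 : Fin 3), j), w) = 2 ∧ w.1 = 0)
        = B' := by
      rw [hB']
      apply cnt_congr
      intro w ha
      have h1 : g s(((1 : Fin 3), j), w) ≠ 1 := color_ne_left R g hfg ha
      have h0 : g s(((1 : Fin 3), j), w) ≠ w.1 := color_ne_right R g hfg ha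
      constructor
      · rintro ⟨-, hw⟩; exact hw
      · intro hw
        refine ⟨?_, hw⟩
        have : g s(((1 : Fin 3), j), w) ≠ 0 := hw ▸ h0
        revert this h1; generalize g s(((1 : Fin 3), j), w) = c; revert c; decide
    have c2 : cnt R ((1 : Fin 3), j) (fun w => g s(((1 : Fin 3), j), w) = 2 ∧ w.1 = 1)
        = C2 := by
      rw [hC2, E]
      refine cnt_congr fun w _ => ?_
      tauto
    rw [c1, c2]; omega
  have e6 : dColor R g 2 (2, j) = 0 := by
    rw [dColor_eq]
    apply cnt_eq_zero
    intro w ha hg2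
    exact color_ne_left R g hfg ha hg2
  have hC := hfg.2.2 2 j
  rw [e4, e5, e6] at hC
  have e7 : nRow R 0 (1, j) = B' := by rw [nRow_eq, hB']
  rw [e1, e7]
  rw [Nat.even_iff] at hC ⊢
  omega

lemma key12 (j : Fin s) :
    Even (dRows R 1 2 (1, j) + nRow R 1 (2, j) + (E R g 1 2 j + E R g 2 0 j)) := by
  have hfin3 : ∀ c : Fin 3, c ≠ 1 → c ≠ 2 → c = 0 := by decide
  have hfin3' : ∀ c : Fin 3, c ≠ 1 → c = 0 ∨ c = 2 := by decide
  set C0 := cnt R ((1 : Fin 3), j) (fun w => w.1 = 1 ∧ g s(((1 : Fin 3), j), w) = 0) with hC0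
  set C2 := E R g 1 2 j with hC2
  set D := cnt R ((1 : Fin 3), j) (fun w => w.1 = 2) with hD
  set D' := cnt R ((2 : Fin 3), j) (fun w => w.1 = 1) with hD'
  set F0 := E R g 2 0 j with hF0
  have e1 : dRows R 1 2 (1, j) = C0 + C2 + D := by
    rw [dRows_eq, cnt_split (q := fun w => w.1 = 2)]
    · congr 1
      rw [hC0, hC2, E, ← cnt_split]
      · refine cnt_congr fun w ha => ?_
        have h1 : g s(((1 : Fin 3), j), w) ≠ 1 := color_ne_left R g hfg ha
        rcases hfin3' _ h1 with h | h <;> simp [h] <;> tauto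
      · rintro w - ⟨⟨-, h1⟩, ⟨-, h2⟩⟩
        rw [h1] at h2; exact absurd h2 (by decide)
    · rintro w - ⟨h1, h2⟩
      rw [h1] at h2; exact absurd h2 (by decide)
  have e3 : D = cnt R ((1 : Fin 3), j) (fun w => w.1 = 2 ∧ g s(((1 : Fin 3), j), w) = 0) := by
    refine cnt_congr fun w ha => ?_
    have h1 : g s(((1 : Fin 3), j), w) ≠ 1 := color_ne_left R g hfg ha
    have h2 : g s(((1 : Fin 3), j), w) ≠ w.1 := color_ne_right R g hfg ha
    constructor
    · intro hw; exact ⟨hw, hfin3 _ h1 (hw ▸ h2)⟩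
    · rintro ⟨hw, -⟩; exact hw
  have e4 : dColor R g 0 (1, j) = C0 + D := by
    rw [dColor_eq, cnt_rows R ((1 : Fin 3), j) (fun w => g s(((1 : Fin 3), j), w) = 0), e3]
    have z0 : cnt R ((1 : Fin 3), j)
        (fun w => g s(((1 : Fin 3), j), w) = 0 ∧ w.1 = 0) = 0 := by
      apply cnt_eq_zero
      rintro w ha ⟨hg0, hw0⟩
      exact color_ne_right R g hfg ha (hg0.trans hw0.symm)
    rw [z0]
    have c1 : cnt R ((1 : Fin 3), j) (fun w => g s(((1 : Fin 3), j), w) = 0 ∧ w.1 = 1)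
        = C0 := by
      rw [hC0]; refine cnt_congr fun w _ => ?_; tauto
    have c2 : cnt R ((1 : Fin 3), j) (fun w => g s(((1 : Fin 3), j), w) = 0 ∧ w.1 = 2)
        = cnt R ((1 : Fin 3), j) (fun w => w.1 = 2 ∧ g s(((1 : Fin 3), j), w) = 0) := by
      refine cnt_congr fun w _ => ?_; tauto
    rw [c1, c2]; omega
  have e5 : dColor R g 0 (2, j) = F0 + D' := by
    rw [dColor_eq, cnt_rows R ((2 : Fin 3), j) (fun w => g s(((2 : Fin 3), j), w) = 0)]
    have z0 : cnt R ((2 : Fin 3), j)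
        (fun w => g s(((2 : Fin 3), j), w) = 0 ∧ w.1 = 0) = 0 := by
      apply cnt_eq_zero
      rintro w ha ⟨hg0, hw0⟩
      exact color_ne_right R g hfg ha (hg0.trans hw0.symm)
    rw [z0]
    have c1 : cnt R ((2 : Fin 3), j) (fun w => g s(((2 : Fin 3), j), w) = 0 ∧ w.1 = 1)
        = D' := by
      rw [hD']
      refine cnt_congr fun w ha => ?_
      have h2 : g s(((2 : Fin 3), j), w) ≠ 2 := color_ne_left R g hfg ha
      have h1 : g s(((2 : Fin 3), j), w) ≠ w.1 := color_ne_right R g hfg ha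
      constructor
      · rintro ⟨-, hw⟩; exact hw
      · intro hw
        refine ⟨?_, hw⟩
        have h1' : g s(((2 : Fin 3), j), w) ≠ 1 := hw ▸ h1
        revert h1' h2; generalize g s(((2 : Fin 3), j), w) = c; revert c; decide
    have c2 : cnt R ((2 : Fin 3), j) (fun w => g s(((2 : Fin 3), j), w) = 0 ∧ w.1 = 2)
        = F0 := by
      rw [hF0, E]
      refine cnt_congr fun w _ => ?_
      tauto
    rw [c1, c2]; omega
  have e6 : dColor R g 0 (0, j) = 0 := by
    rw [dColor_eq]
    apply cnt_eq_zero
    intro w ha hg0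
    exact color_ne_left R g hfg ha hg0
  have hC := hfg.2.2 0 j
  rw [e4, e5, e6] at hC
  have e7 : nRow R 1 (2, j) = D' := by rw [nRow_eq, hD']
  rw [e1, e7]
  rw [Nat.even_iff] at hC ⊢
  omega

end Key

/-- The colour assigned to row `i`: row-`i` internal edges of this colour are counted. -/
def colOf : Fin 3 → Fin 3 := fun i => if i = 0 then 1 else if i = 1 then 2 else 0

/-- The parity colouring: `(i, j)` is black iff the number of colour-`colOf i`
edges inside row `i` incident with it is odd. -/
noncomputable def phi (v : Fin 3 × Fin s) : Bool :=
  decide (Odd (cnt R v (fun w => w.1 = v.1 ∧ g s(v, w) = colOf v.1)))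

lemma phi_eq (i : Fin 3) (j : Fin s) :
    phi R g (i, j) = decide (Odd (E R g i (colOf i) j)) := rfl

lemma cond01 (hfg : Amiable R (fun v => v.1) g) (j : Fin s) :
    (phi R g (0, j) = phi R g (1, j)) ↔ Even (dRows R 0 1 (0, j) + nRow R 0 (1, j)) := by
  have hk := key01 R g hfg j
  rw [phi_eq, phi_eq]
  have h0 : colOf (0 : Fin 3) = 1 := by decide
  have h1 : colOf (1 : Fin 3) = 2 := by decide
  rw [h0, h1, decide_eq_decide, Nat.odd_iff, Nat.odd_iff]
  rw [Nat.even_iff] at hk ⊢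
  omega

lemma cond12 (hfg : Amiable R (fun v => v.1) g) (j : Fin s) :
    (phi R g (1, j) = phi R g (2, j)) ↔ Even (dRows R 1 2 (1, j) + nRow R 1 (2, j)) := by
  have hk := key12 R g hfg j
  rw [phi_eq, phi_eq]
  have h1 : colOf (1 : Fin 3) = 2 := by decide
  have h2 : colOf (2 : Fin 3) = 0 := by decide
  rw [h1, h2, decide_eq_decide, Nat.odd_iff, Nat.odd_iff]
  rw [Nat.even_iff] at hk ⊢
  omega

lemma cast_zmod2 (n : ℕ) : ((n : ZMod 2)) = if Odd n then 1 else 0 := by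
  rcases Nat.even_or_odd n with h | h
  · rw [if_neg (Nat.not_odd_iff_even.mpr h)]
    exact (ZMod.natCast_eq_zero_iff n 2).mpr h.two_dvd
  · rw [if_pos h]
    obtain ⟨k, hk⟩ := h
    subst hk
    push_cast
    rw [show ((2 : ZMod 2)) = 0 by rfl]
    ring

lemma row_even (i : Fin 3) (K : (R.induce (rowSet s i)).ConnectedComponent) :
    Even ({u : rowSet s i | u ∈ K.supp ∧ phi R g u.val = true}.ncard) := by
  classical
  set c := colOf i with hc
  set emb : Fin s → rowSet s i := fun j => (⟨(i, j), rfl⟩ : rowSet s i) with hemb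
  have hinj : Function.Injective emb := by
    intro a b h
    have := congrArg (fun u : rowSet s i => (u : Fin 3 × Fin s).2) h
    simpa [hemb] using this
  have hset : {u : rowSet s i | u ∈ K.supp ∧ phi R g u.val = true}
      = emb '' {j | emb j ∈ K.supp ∧ phi R g (i, j) = true} := by
    ext u
    simp only [Set.mem_setOf_eq, Set.mem_image]
    constructor
    · rintro ⟨h1, h2⟩
      have hu : (u : Fin 3 × Fin s).1 = i := u.2
      have hue : emb (u : Fin 3 × Fin s).2 = u := by
        apply Subtype.ext
        apply Prod.ext
        · exact hu.symm
        · rfl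
      refine ⟨(u : Fin 3 × Fin s).2, ⟨?_, ?_⟩, hue⟩
      · rw [hue]; exact h1
      · rw [← hue] at h2; exact h2
    · rintro ⟨j, ⟨hj1, hj2⟩, rfl⟩
      exact ⟨hj1, hj2⟩
  rw [hset, Set.ncard_image_of_injective _ hinj]
  have hsetF : {j | emb j ∈ K.supp ∧ phi R g (i, j) = true}
      = ↑((univ : Finset (Fin s)).filter (fun j => emb j ∈ K.supp ∧ phi R g (i, j) = true)) := by
    ext j; simp
  rw [hsetF, Set.ncard_coe_finset]
  set S : Finset (Fin s) := univ.filter (fun j => emb j ∈ K.supp) with hS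
  have hfil : (univ.filter (fun j => emb j ∈ K.supp ∧ phi R g (i, j) = true))
      = S.filter (fun j => Odd (E R g i c j)) := by
    rw [hS, filter_filter]
    apply filter_congr
    intro j _
    simp [phi_eq, hc]
  rw [hfil]
  set A : Fin s → Fin s → ZMod 2 :=
    fun j j' => if R.Adj (i, j) (i, j') ∧ g s((i, j), (i, j')) = c then 1 else 0 with hA
  have hAsymm : ∀ j j', A j j' = A j' j := by
    intro j j'
    rw [hA]
    simp only
    have hsw : s(((i : Fin 3), j), ((i : Fin 3), j')) = s(((i : Fin 3), j'), ((i : Fin 3), j)) :=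
      Sym2.eq_swap
    rw [hsw, R.adj_comm]
  have hAdiag : ∀ j, A j j = 0 := by
    intro j
    rw [hA]
    simp only
    rw [if_neg]
    rintro ⟨ha, -⟩
    exact R.irrefl ha
  have hEcast : ∀ j, ((E R g i c j : ZMod 2)) = ∑ j' ∈ (univ : Finset (Fin s)), A j j' := by
    intro j
    have hcard : E R g i c j
        = ((univ : Finset (Fin s)).filter
            (fun j' : Fin s => R.Adj (i, j) (i, j') ∧ g s((i, j), (i, j')) = c)).card := by
      rw [E, cnt]
      apply Finset.card_nbij' (i := fun w => w.2) (j := fun j' => ((i, j') : Fin 3 × Fin s))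
      · intro w hw
        simp only [mem_coe, mem_filter, mem_univ, true_and] at hw ⊢
        have hw1 : w = (i, w.2) := by
          apply Prod.ext
          · exact hw.2.1
          · rfl
        rw [← hw1]
        exact ⟨hw.1, hw.2.2⟩
      · intro j' hj'
        simp only [mem_coe, mem_filter, mem_univ, true_and] at hj' ⊢
        exact hj'
      · intro w hw
        simp only [mem_coe, mem_filter, mem_univ, true_and] at hw
        apply Prod.ext
        · exact hw.2.1.symm
        · rfl
      · intro j' _
        rfl
    rw [hcard, card_filter]
    push_cast
    apply Finset.sum_congr rfl
    intro j' _
    rw [hA]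
  have hclosed : ∀ j, j ∈ S → ∀ j', A j j' ≠ 0 → j' ∈ S := by
    intro j hj j' hne
    rw [hA] at hne
    simp only at hne
    by_cases h : R.Adj (i, j) (i, j') ∧ g s((i, j), (i, j')) = c
    · have hadj : (R.induce (rowSet s i)).Adj (emb j) (emb j') := by
        simp only [SimpleGraph.comap_adj, Function.Embedding.coe_subtype]
        exact h.1
      rw [hS, mem_filter] at hj ⊢
      refine ⟨mem_univ _, ?_⟩
      rw [SimpleGraph.ConnectedComponent.mem_supp_iff] at hj ⊢
      rw [← hj.2]
      exact SimpleGraph.ConnectedComponent.sound hadj.symm.reachable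
    · exact absurd (if_neg h) hne
  have hmain : ((S.filter (fun j => Odd (E R g i c j))).card : ZMod 2) = 0 := by
    rw [card_filter]
    push_cast
    have step1 : ∀ j ∈ S, ((if Odd (E R g i c j) then (1 : ZMod 2) else 0)) = ∑ j' ∈ S, A j j' := by
      intro j hj
      rw [← cast_zmod2, hEcast]
      exact (Finset.sum_subset (subset_univ S) (fun x _ hx => by
        by_contra hne
        exact hx (hclosed j hj x hne))).symm
    rw [Finset.sum_congr rfl step1, ← Finset.sum_product']
    apply Finset.sum_involution (fun p _ => (p.2, p.1))
    · intro p hp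
      rw [hAsymm p.2 p.1]
      rw [← two_mul, show ((2 : ZMod 2)) = 0 by rfl, zero_mul]
    · intro p hp hne heq
      have hps : p.2 = p.1 := congrArg Prod.fst heq
      apply hne
      rw [hps, hAdiag]
    · intro p hp
      rw [mem_product] at hp ⊢
      exact ⟨hp.2, hp.1⟩
    · intro p hp
      rfl
  obtain ⟨k, hk⟩ := (ZMod.natCast_eq_zero_iff _ 2).mp hmain
  exact ⟨k, by omega⟩

end Stmt11Aux


/-- If the row coloring `f (i, j) = i` extends to an amiable coloring of `R`
(with `R_C` eulerian), then `R` has a symmetric parity-coloring. -/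
theorem stmt11 {s : ℕ} (R : SimpleGraph (Fin 3 × Fin s))
    (hcol : ColIndep R) (heul : EulerianRC R)
    (g : Sym2 (Fin 3 × Fin s) → Fin 3)
    (hfg : Amiable R (fun v => v.1) g) :
    ∃ φ : Fin 3 × Fin s → Bool, SymParity R φ := by
  refine ⟨Stmt11Aux.phi R g, ?_, ?_, ?_⟩
  · exact fun j => Stmt11Aux.cond01 R g hfg j
  · exact fun j => Stmt11Aux.cond12 R g hfg j
  · exact fun i K => Stmt11Aux.row_even R g i K
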